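/- Let T be a rooted tree with n nodes and maximum degree Δ ≥ 2. For every binary string M of length ⌈log₂(n+1)⌉ + 1 there exists a subtree T' of T containing the root, in which every node has at most ⌊log₂ Δ⌋ + 1 children, together with an assignment of binary strings to the nodes of T' such that each node of T' is assigned a string of length at most 3, the root is assigned a string of length at most 2, and the concatenation of all assigned strings (in a suitable traversal order of T') equals M. -/

import Mathlib

open SimpleGraph Finset

section Chunks

/-- split a list into `t` chunks of size 3 -/
def chunks3 : ℕ → List Bool → List (List Bool)
  | 0, _ => []
  | (t+1), N => N.take 3 :: chunks3 t (N.drop 3)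

lemma chunks3_length (t : ℕ) (N : List Bool) : (chunks3 t N).length = t := by
  induction t generalizing N with
  | zero => rfl
  | succ t ih => simp [chunks3, ih]

lemma chunks3_flatten (t : ℕ) (N : List Bool) : (chunks3 t N).flatten = N.take (3*t) := by
  induction t generalizing N with
  | zero => simp [chunks3]
  | succ t ih =>
    simp only [chunks3, List.flatten_cons, ih]
    rw [show 3 * (t+1) = 3 + 3*t by ring, List.take_add]

lemma chunks3_getElem (t : ℕ) (N : List Bool) (i : ℕ) (h : i < t) :
    (chunks3 t N)[i]'(by simpa [chunks3_length]) = (N.drop (3*i)).take 3 := by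
  induction t generalizing N i with
  | zero => omega
  | succ t ih =>
    cases i with
    | zero => simp [chunks3]
    | succ i =>
      simp only [chunks3, List.getElem_cons_succ]
      rw [ih _ _ (by omega), List.drop_drop]
      congr 2
      ring

end Chunks

section Tree

variable {V : Type*} [Fintype V] [DecidableEq V]
variable (T : SimpleGraph V) [DecidableRel T.Adj] (r : V)

/-- children of `v` in the tree rooted at `r` -/
noncomputable def kids (v : V) : Finset V :=
  Finset.univ.filter (fun u => T.Adj v u ∧ T.dist r u = T.dist r v + 1)

/-- descendants of `v` (incl. `v`) in the tree rooted at `r` -/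
noncomputable def desc (v : V) : Finset V :=
  Finset.univ.filter (fun u => T.dist r u = T.dist r v + T.dist v u)

variable {T r}

lemma mem_kids {v u : V} : u ∈ kids T r v ↔ T.Adj v u ∧ T.dist r u = T.dist r v + 1 := by
  simp [kids]

lemma mem_desc {v u : V} : u ∈ desc T r v ↔ T.dist r u = T.dist r v + T.dist v u := by
  simp [desc]

lemma self_mem_desc (v : V) : v ∈ desc T r v := by simp [mem_desc]

variable (hc : T.Connected)
include hc

lemma dist_adj {v u : V} (h : T.Adj v u) : T.dist v u = 1 := by
  have h1 : T.dist v u ≤ 1 := by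
    simpa using SimpleGraph.dist_le (SimpleGraph.Walk.cons h SimpleGraph.Walk.nil)
  have h2 : T.dist v u ≠ 0 := fun h0 => h.ne (hc.dist_eq_zero_iff.mp h0)
  omega

lemma kid_mem_desc {v u : V} (h : u ∈ kids T r v) : u ∈ desc T r v := by
  rw [mem_kids] at h
  rw [mem_desc, dist_adj hc h.1]
  exact h.2

lemma desc_mono {v w : V} (h : w ∈ desc T r v) : desc T r w ⊆ desc T r v := by
  intro x hx
  rw [mem_desc] at h hx ⊢
  have t1 : T.dist v x ≤ T.dist v w + T.dist w x := hc.dist_triangle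
  have t2 : T.dist r x ≤ T.dist r v + T.dist v x := hc.dist_triangle
  omega

lemma not_mem_desc_kid {v u : V} (h : u ∈ kids T r v) : v ∉ desc T r u := by
  rw [mem_kids] at h
  rw [mem_desc, h.2]
  intro hv
  have : T.dist u v ≠ 0 := fun h0 => h.1.ne' (hc.dist_eq_zero_iff.mp h0)
  omega

lemma dist_of_mem_desc {v w : V} (h : w ∈ desc T r v) (hne : w ≠ v) :
    1 ≤ T.dist v w := hc.pos_dist_of_ne (Ne.symm hne)

/-- existence of a child through which a proper descendant passes -/
lemma exists_kid {v w : V} (h : w ∈ desc T r v) (hne : w ≠ v) :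
    ∃ u ∈ kids T r v, w ∈ desc T r u := by
  have hd : 1 ≤ T.dist v w := dist_of_mem_desc hc h hne
  obtain ⟨p, hp⟩ := hc.exists_walk_length_eq_dist v w
  rw [mem_desc] at h
  cases p with
  | nil => omega
  | @cons _ u _ ha q =>
    have hq : q.length = T.dist v w - 1 := by
      simp only [SimpleGraph.Walk.length_cons] at hp; omega
    have hqd : T.dist u w ≤ T.dist v w - 1 := hq ▸ SimpleGraph.dist_le q
    have hvu : T.dist v u = 1 := dist_adj hc ha
    have t1 : T.dist r w ≤ T.dist r u + T.dist u w := hc.dist_triangle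
    have t2 : T.dist r u ≤ T.dist r v + T.dist v u := hc.dist_triangle
    have hru : T.dist r u = T.dist r v + 1 := by omega
    refine ⟨u, mem_kids.2 ⟨ha, hru⟩, mem_desc.2 ?_⟩
    have : T.dist v w ≤ T.dist v u + T.dist u w := hc.dist_triangle
    omega

omit hc

/-- uniqueness of the child through which a descendant passes -/
lemma kid_unique (hT : T.IsTree) {v u₁ u₂ w : V} (h₁ : u₁ ∈ kids T r v) (h₂ : u₂ ∈ kids T r v)
    (hw₁ : w ∈ desc T r u₁) (hw₂ : w ∈ desc T r u₂) : u₁ = u₂ := by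
  have hc := hT.isConnected
  rw [mem_kids] at h₁ h₂
  rw [mem_desc] at hw₁ hw₂
  have hvw : ∀ u : V, T.Adj v u → T.dist r u = T.dist r v + 1 →
      T.dist r w = T.dist r u + T.dist u w → T.dist u w + 1 = T.dist v w := by
    intro u ha hr hw
    have t1 : T.dist r w ≤ T.dist r v + T.dist v w := hc.dist_triangle
    have t2 : T.dist v w ≤ T.dist v u + T.dist u w := hc.dist_triangle
    have := dist_adj hc ha
    omega
  have hd₁ := hvw u₁ h₁.1 h₁.2 hw₁
  have hd₂ := hvw u₂ h₂.1 h₂.2 hw₂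
  -- build paths from v to w through u₁ and u₂
  have key : ∀ u : V, T.Adj v u → T.dist u w + 1 = T.dist v w →
      ∃ p : T.Walk v w, p.IsPath ∧ p.support.tail.head? = some u := by
    intro u ha hd
    obtain ⟨q, hq⟩ := hc.exists_walk_length_eq_dist u w
    have hvq : v ∉ q.bypass.support := by
      intro hvs
      have h1 : (q.bypass.takeUntil v hvs).length + (q.bypass.dropUntil v hvs).length
          = q.bypass.length := by
        have := congrArg SimpleGraph.Walk.length (q.bypass.take_spec hvs)
        rwa [SimpleGraph.Walk.length_append] at this
      have h2 : T.dist u v ≤ (q.bypass.takeUntil v hvs).length := SimpleGraph.dist_le _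
      have h3 : T.dist v w ≤ (q.bypass.dropUntil v hvs).length := SimpleGraph.dist_le _
      have h4 : q.bypass.length ≤ q.length := SimpleGraph.Walk.length_bypass_le q
      have h5 : T.dist u v = 1 := by rw [T.dist_comm]; exact dist_adj hc ha
      omega
    refine ⟨SimpleGraph.Walk.cons ha q.bypass, q.bypass_isPath.cons hvq, ?_⟩
    · rw [SimpleGraph.Walk.support_cons, List.tail_cons, SimpleGraph.Walk.support_eq_cons]
      rfl
  obtain ⟨p₁, hp₁, hu₁⟩ := key u₁ h₁.1 hd₁
  obtain ⟨p₂, hp₂, hu₂⟩ := key u₂ h₂.1 hd₂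
  obtain ⟨p, -, hpu⟩ := hT.existsUnique_path v w
  have : p₁ = p₂ := (hpu p₁ hp₁).trans (hpu p₂ hp₂).symm
  rw [this, hu₂] at hu₁
  exact (Option.some.inj hu₁).symm

end Tree

section Tree2
variable {V : Type*} [Fintype V] [DecidableEq V]
variable {T : SimpleGraph V} [DecidableRel T.Adj] {r : V}

lemma desc_card_eq (hT : T.IsTree) (v : V) :
    (desc T r v).card = 1 + ∑ u ∈ kids T r v, (desc T r u).card := by
  have hc := hT.isConnected
  have hpart : desc T r v = insert v ((kids T r v).biUnion (fun u => desc T r u)) := by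
    ext w
    simp only [Finset.mem_insert, Finset.mem_biUnion]
    constructor
    · intro hw
      by_cases hwv : w = v
      · exact Or.inl hwv
      · exact Or.inr (exists_kid hc hw hwv)
    · rintro (rfl | ⟨u, hu, hwu⟩)
      · exact self_mem_desc _
      · exact desc_mono hc (kid_mem_desc hc hu) hwu
  have hdisj : ∀ u₁ ∈ kids T r v, ∀ u₂ ∈ kids T r v, u₁ ≠ u₂ →
      Disjoint (desc T r u₁) (desc T r u₂) := by
    intro u₁ h₁ u₂ h₂ hne
    rw [Finset.disjoint_left]
    intro w hw₁ hw₂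
    exact hne (kid_unique hT h₁ h₂ hw₁ hw₂)
  have hnot : v ∉ (kids T r v).biUnion (fun u => desc T r u) := by
    intro h
    obtain ⟨u, hu, hv⟩ := Finset.mem_biUnion.1 h
    exact not_mem_desc_kid hc hu hv
  rw [hpart, Finset.card_insert_of_notMem hnot, Finset.card_biUnion hdisj]
  omega

lemma desc_root : desc T r r = Finset.univ := by
  ext u
  simp [mem_desc, SimpleGraph.dist_self]

lemma kids_card_le {Δ : ℕ} (hdeg : ∀ v, (T.neighborSet v).ncard ≤ Δ) (v : V) :
    (kids T r v).card ≤ Δ := by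
  have h1 : kids T r v ⊆ T.neighborFinset v := fun u hu =>
    (T.mem_neighborFinset v u).2 (mem_kids.1 hu).1
  calc (kids T r v).card ≤ (T.neighborFinset v).card := Finset.card_le_card h1
    _ = (T.neighborSet v).ncard := by
        rw [SimpleGraph.neighborFinset_def, ← Set.ncard_eq_toFinset_card']
    _ ≤ Δ := hdeg v

lemma reach_mono {A B : Set V} (hAB : A ⊆ B) {a b : V} (ha : a ∈ A) (hb : b ∈ A)
    (h : (T.induce A).Reachable ⟨a, ha⟩ ⟨b, hb⟩) :
    (T.induce B).Reachable ⟨a, hAB ha⟩ ⟨b, hAB hb⟩ := by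
  exact h.map ((⟨fun x => ⟨x.1, hAB x.2⟩, fun hxy => by simpa using hxy⟩ :
    T.induce A →g T.induce B))

end Tree2

section Key
variable {V : Type*} [Fintype V] [DecidableEq V]

lemma key (T : SimpleGraph V) [DecidableRel T.Adj] (hT : T.IsTree) (r : V) (Δ : ℕ)
    (hΔ : 2 ≤ Δ) (hdeg : ∀ v, (T.neighborSet v).ncard ≤ Δ) :
    ∀ N v, (desc T r v).card ≤ N →
    ∃ l : List V, l.Nodup ∧ (∃ l', l = v :: l') ∧ l.toFinset ⊆ desc T r v ∧
      (T.induce (l.toFinset : Set V)).Connected ∧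
      (∀ w ∈ l.toFinset, ((kids T r w) ∩ l.toFinset).card ≤ Nat.log 2 Δ + 1) ∧
      Nat.clog 2 ((desc T r v).card + 1) + 2 ≤ 3 * l.length := by
  have hc := hT.isConnected
  intro N
  induction N with
  | zero =>
    intro v hv
    have : 0 < (desc T r v).card := Finset.card_pos.2 ⟨v, self_mem_desc v⟩
    omega
  | succ N ih =>
    intro v hv
    by_cases hk : kids T r v = ∅
    · -- leaf case
      have hdesc : desc T r v = {v} := by
        apply Finset.eq_singleton_iff_unique_mem.2
        refine ⟨self_mem_desc v, fun w hw => ?_⟩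
        by_contra hne
        obtain ⟨u, hu, -⟩ := exists_kid hc hw hne
        simp [hk] at hu
      refine ⟨[v], by simp, ⟨[], rfl⟩, by simp [hdesc, self_mem_desc], ?_, ?_, ?_⟩
      · have hone : ∀ a : (([v].toFinset : Finset V) : Set V), a = (⟨v, by simp⟩ :
            (([v].toFinset : Finset V) : Set V)) := by
          rintro ⟨a, haa⟩
          simp only [List.toFinset_cons, List.toFinset_nil, Finset.coe_insert, Finset.coe_empty,
            Set.mem_insert_iff, Set.mem_empty_iff_false, or_false] at haa
          exact Subtype.ext haa
        rw [SimpleGraph.connected_iff]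
        refine ⟨fun a b => by rw [hone a, hone b], ⟨⟨v, by simp⟩⟩⟩
      · intro w hw
        simp only [List.toFinset_cons, List.toFinset_nil, insert_empty_eq,
          Finset.mem_singleton] at hw
        subst hw
        rw [show kids T r w ∩ [w].toFinset = ∅ by rw [hk]; simp]
        simp
      · have h2 : Nat.clog 2 2 ≤ 1 := (Nat.clog_le_iff_le_pow (by norm_num)).2 (by norm_num)
        simp only [hdesc, Finset.card_singleton, List.length_singleton]
        have h2 : Nat.clog 2 (1 + 1) ≤ 1 := (Nat.clog_le_iff_le_pow (by norm_num)).2 (by norm_num)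
        omega
    · -- main case
      obtain ⟨u, hu, hmax⟩ := Finset.exists_max_image (kids T r v) (fun c => (desc T r c).card)
        (Finset.nonempty_iff_ne_empty.2 hk)
      have hss : desc T r u ⊂ desc T r v :=
        (Finset.ssubset_iff_of_subset (desc_mono hc (kid_mem_desc hc hu))).2
          ⟨v, self_mem_desc v, not_mem_desc_kid hc hu⟩
      have hdu_lt : (desc T r u).card < (desc T r v).card := Finset.card_lt_card hss
      obtain ⟨lu, hlu_nodup, ⟨lu', hlu_eq⟩, hlu_sub, hlu_conn, hlu_kids, hlu_len⟩ :=
        ih u (by omega)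
      obtain ⟨m, hm⟩ : ∃ m, m = min ((kids T r v).card) (Nat.log 2 Δ + 1) := ⟨_, rfl⟩
      have hk1 : 1 ≤ (kids T r v).card := Finset.card_pos.2 (Finset.nonempty_iff_ne_empty.2 hk)
      have hm1 : 1 ≤ m := by omega
      have hmk : m ≤ (kids T r v).card := by omega
      have hmb : m ≤ Nat.log 2 Δ + 1 := by omega
      have hkE : m - 1 ≤ ((kids T r v).erase u).card := by
        rw [Finset.card_erase_of_mem hu]; omega
      obtain ⟨E, hE_sub, hE_card⟩ := Finset.exists_subset_card_eq hkE
      have hE_kids : ∀ e ∈ E, e ∈ kids T r v := fun e he => Finset.mem_of_mem_erase (hE_sub he)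
      have hE_ne_u : ∀ e ∈ E, e ≠ u := fun e he => Finset.ne_of_mem_erase (hE_sub he)
      have hE_not_desc_u : ∀ e ∈ E, e ∉ desc T r u := fun e he hd =>
        hE_ne_u e he (kid_unique hT (hE_kids e he) hu (self_mem_desc e) hd)
      have hv_not_lu : v ∉ lu.toFinset := fun h => not_mem_desc_kid hc hu (hlu_sub h)
      have hv_not_E : v ∉ E := fun h => T.irrefl (mem_kids.1 (hE_kids v h)).1
      have hE_not_lu : ∀ e ∈ E, e ∉ lu.toFinset := fun e he h => hE_not_desc_u e he (hlu_sub h)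
      have hu_lu : u ∈ lu.toFinset := by rw [hlu_eq]; simp
      refine ⟨v :: (lu ++ E.toList), ?_, ⟨lu ++ E.toList, rfl⟩, ?_, ?_, ?_, ?_⟩
      · -- Nodup
        rw [List.nodup_cons, List.nodup_append]
        refine ⟨?_, ⟨hlu_nodup, Finset.nodup_toList E, ?_⟩⟩
        · rw [List.mem_append]
          rintro (h | h)
          · exact hv_not_lu (List.mem_toFinset.2 h)
          · exact hv_not_E (by simpa using h)
        · intro a ha b hb hab
          subst hab
          exact hE_not_lu a (by simpa using hb) (List.mem_toFinset.2 ha)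
      · -- subset
        intro x hx
        simp only [List.toFinset_cons, List.toFinset_append, Finset.toList_toFinset,
          Finset.mem_insert, Finset.mem_union] at hx
        rcases hx with rfl | hx | hx
        · exact self_mem_desc _
        · exact desc_mono hc (kid_mem_desc hc hu) (hlu_sub hx)
        · exact kid_mem_desc hc (hE_kids x hx)
      · -- connectivity
        have hSmem : ∀ x : V, x ∈ ((v :: (lu ++ E.toList)).toFinset : Set V) ↔
            x = v ∨ x ∈ lu.toFinset ∨ x ∈ E := by
          intro x
          simp [List.mem_toFinset]
        have hvS : v ∈ ((v :: (lu ++ E.toList)).toFinset : Set V) := (hSmem v).2 (Or.inl rfl)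
        have hreach : ∀ a : ((v :: (lu ++ E.toList)).toFinset : Set V),
            (T.induce ((v :: (lu ++ E.toList)).toFinset : Set V)).Reachable a ⟨v, hvS⟩ := by
          rintro ⟨a, haS⟩
          rcases (hSmem a).1 haS with rfl | ha | ha
          · rfl
          · have huS : (u : V) ∈ ((v :: (lu ++ E.toList)).toFinset : Set V) :=
              (hSmem u).2 (Or.inr (Or.inl hu_lu))
            have hsub2 : (lu.toFinset : Set V) ⊆ ((v :: (lu ++ E.toList)).toFinset : Set V) :=
              fun x hx => (hSmem x).2 (Or.inr (Or.inl hx))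
            have h1 := hlu_conn.preconnected ⟨a, ha⟩ ⟨u, hu_lu⟩
            have h2 := reach_mono hsub2 ha hu_lu h1
            refine h2.trans (SimpleGraph.Adj.reachable ?_)
            simp only [SimpleGraph.comap_adj, Function.Embedding.coe_subtype]
            exact ((mem_kids.1 hu).1).symm
          · refine SimpleGraph.Adj.reachable ?_
            simp only [SimpleGraph.comap_adj, Function.Embedding.coe_subtype]
            exact ((mem_kids.1 (hE_kids a ha)).1).symm
        rw [SimpleGraph.connected_iff]
        exact ⟨fun x y => (hreach x).trans (hreach y).symm, ⟨⟨v, hvS⟩⟩⟩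
      · -- kids count
        intro w hw
        have hSmem : ∀ x : V, x ∈ (v :: (lu ++ E.toList)).toFinset ↔
            x = v ∨ x ∈ lu.toFinset ∨ x ∈ E := by
          intro x; simp [List.mem_toFinset]
        rcases (hSmem w).1 hw with rfl | hwl | hwE
        · -- w = v
          have hsub3 : kids T r w ∩ (w :: (lu ++ E.toList)).toFinset ⊆ insert u E := by
            intro x hx
            obtain ⟨hx1, hx2⟩ := Finset.mem_inter.1 hx
            rcases (hSmem x).1 hx2 with rfl | hxl | hxE
            · exact absurd (mem_kids.1 hx1).1 (T.irrefl)
            · exact Finset.mem_insert.2 (Or.inl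
                (kid_unique hT hx1 hu (self_mem_desc x) (hlu_sub hxl)))
            · exact Finset.mem_insert.2 (Or.inr hxE)
          refine le_trans (Finset.card_le_card hsub3) ?_
          refine le_trans (Finset.card_insert_le u E) ?_
          rw [hE_card]
          omega
        · -- w ∈ lu
          have heq : kids T r w ∩ (v :: (lu ++ E.toList)).toFinset = kids T r w ∩ lu.toFinset := by
            ext x
            simp only [Finset.mem_inter]
            constructor
            · rintro ⟨hx1, hx2⟩
              refine ⟨hx1, ?_⟩
              have hxdu : x ∈ desc T r u := desc_mono hc (hlu_sub hwl) (kid_mem_desc hc hx1)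
              rcases (hSmem x).1 hx2 with rfl | hxl | hxE
              · exact absurd hxdu (not_mem_desc_kid hc hu)
              · exact hxl
              · exact absurd hxdu (hE_not_desc_u x hxE)
            · rintro ⟨hx1, hx2⟩
              exact ⟨hx1, (hSmem x).2 (Or.inr (Or.inl hx2))⟩
          rw [heq]
          exact hlu_kids w hwl
        · -- w ∈ E
          have heq : kids T r w ∩ (v :: (lu ++ E.toList)).toFinset = ∅ := by
            rw [Finset.eq_empty_iff_forall_notMem]
            intro x hx
            obtain ⟨hx1, hx2⟩ := Finset.mem_inter.1 hx
            have hxdw : x ∈ desc T r w := kid_mem_desc hc hx1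
            rcases (hSmem x).1 hx2 with rfl | hxl | hxE
            · exact not_mem_desc_kid hc (hE_kids w hwE) hxdw
            · exact hE_ne_u w hwE (kid_unique hT (hE_kids w hwE) hu hxdw (hlu_sub hxl))
            · have : x = w := kid_unique hT (hE_kids x hxE) (hE_kids w hwE) (self_mem_desc x) hxdw
              subst this
              exact T.irrefl (mem_kids.1 hx1).1
          rw [heq]
          simp
      · -- length arithmetic
        have hlen : (v :: (lu ++ E.toList)).length = lu.length + m := by
          simp only [List.length_cons, List.length_append, Finset.length_toList, hE_card]
          omega
        rw [hlen]
        have hnu1 : 1 ≤ (desc T r u).card := Finset.card_pos.2 ⟨u, self_mem_desc u⟩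
        suffices hcl : Nat.clog 2 ((desc T r v).card + 1) ≤
            Nat.clog 2 ((desc T r u).card + 1) + 3 * m by omega
        rw [Nat.clog_le_iff_le_pow (by norm_num)]
        have hsum : (desc T r v).card ≤ 1 + (kids T r v).card * (desc T r u).card := by
          rw [desc_card_eq hT v]
          have := Finset.sum_le_card_nsmul (kids T r v) (fun c => (desc T r c).card)
            ((desc T r u).card) (fun c hcm => hmax c hcm)
          simp only [smul_eq_mul] at this
          omega
        have hk8 : (kids T r v).card ≤ 8 ^ m := by
          rcases le_total ((kids T r v).card) (Nat.log 2 Δ + 1) with h | h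
          · have hmk' : m = (kids T r v).card := by omega
            rw [hmk']
            exact le_of_lt (Nat.lt_pow_self (by norm_num))
          · have hmb' : m = Nat.log 2 Δ + 1 := by omega
            have h1 : (kids T r v).card ≤ Δ := kids_card_le hdeg v
            have h2 : Δ < 2 ^ (Nat.log 2 Δ + 1) := Nat.lt_pow_succ_log_self (by norm_num) Δ
            have h3 : 2 ^ (Nat.log 2 Δ + 1) ≤ 8 ^ (Nat.log 2 Δ + 1) :=
              Nat.pow_le_pow_left (by norm_num) _
            rw [hmb']
            omega
        have h81 : 2 ≤ 8 ^ m := by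
          calc 2 ≤ 8 ^ 1 := by norm_num
          _ ≤ 8 ^ m := Nat.pow_le_pow_right (by norm_num) hm1
        calc (desc T r v).card + 1 ≤ (1 + (kids T r v).card * (desc T r u).card) + 1 := by omega
          _ ≤ ((desc T r u).card + 1) * 8 ^ m := by
              have := Nat.mul_le_mul_left ((desc T r u).card) hk8
              nlinarith
          _ = ((desc T r u).card + 1) * 2 ^ (3 * m) := by
              rw [show (8:ℕ) = 2^3 by norm_num, ← pow_mul]
          _ ≤ 2 ^ Nat.clog 2 ((desc T r u).card + 1) * 2 ^ (3 * m) :=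
              Nat.mul_le_mul_right _ (Nat.le_pow_clog (by norm_num) _)
          _ = 2 ^ (Nat.clog 2 ((desc T r u).card + 1) + 3 * m) := (pow_add 2 _ _).symm

end Key



/-- tree-storage lemma: in a rooted tree `T` with `n` nodes and maximum
degree `Δ ≥ 2`, any binary string `M` of length `⌈log₂(n+1)⌉ + 1` can be distributed,
in some traversal order, into strings of length ≤ 3 (≤ 2 at the root) assigned to the
nodes of a subtree `T'` containing the root in which every node has at most
`⌊log₂ Δ⌋ + 1` children. -/
theorem stmt0 {V : Type*} [Fintype V] [DecidableEq V]
    (T : SimpleGraph V) (hT : T.IsTree) (r : V) (n Δ : ℕ)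
    (hn : Fintype.card V = n) (hΔ : 2 ≤ Δ)
    (hdeg : ∀ v, (T.neighborSet v).ncard ≤ Δ)
    (M : List Bool) (hM : M.length = Nat.clog 2 (n + 1) + 1) :
    ∃ (S : Finset V) (f : V → List Bool) (l : List V),
      r ∈ S ∧
      (SimpleGraph.induce (S : Set V) T).Connected ∧
      (∀ v ∈ S,
        {u | u ∈ S ∧ T.Adj v u ∧ T.dist r u = T.dist r v + 1}.ncard ≤
          Nat.log 2 Δ + 1) ∧
      (∀ v ∈ S, (f v).length ≤ 3) ∧
      (f r).length ≤ 2 ∧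
      l.Nodup ∧ l.toFinset = S ∧ (l.map f).flatten = M := by
  classical
  haveI : DecidableRel T.Adj := Classical.decRel _
  have hc := hT.isConnected
  have hn1 : (desc T r r).card = n := by
    rw [desc_root, ← hn, Finset.card_univ]
  obtain ⟨l, hnodup, ⟨l', hleq⟩, hsub, hconn, hkids, hlen⟩ :=
    key T hT r Δ hΔ hdeg n r (le_of_eq hn1)
  rw [hn1] at hlen
  have hrl' : r ∉ l' := by
    have h := hnodup; rw [hleq, List.nodup_cons] at h; exact h.1
  have hl'nodup : l'.Nodup := by
    have h := hnodup; rw [hleq, List.nodup_cons] at h; exact h.2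
  have hlenl : l.length = l'.length + 1 := by rw [hleq]; simp
  refine ⟨l.toFinset, fun w => if w = r then M.take 2 else
      ((M.drop 2).drop (3 * (l'.idxOf w))).take 3, l, ?_, hconn, ?_, ?_, ?_, hnodup, rfl, ?_⟩
  · rw [hleq]; simp
  · intro v hvS
    have hset : {u | u ∈ l.toFinset ∧ T.Adj v u ∧ T.dist r u = T.dist r v + 1} =
        ↑(kids T r v ∩ l.toFinset) := by
      ext u
      simp only [Set.mem_setOf_eq, Finset.coe_inter, Set.mem_inter_iff, Finset.mem_coe, mem_kids]
      tauto
    rw [hset, Set.ncard_coe_finset]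
    exact hkids v hvS
  · intro v hv
    by_cases hvr : v = r <;> simp [hvr, List.length_take] <;> omega
  · simp [List.length_take]
  · rw [hleq]
    simp only [List.map_cons, if_pos rfl, List.flatten_cons]
    have hmapeq : l'.map (fun w => if w = r then M.take 2 else
        ((M.drop 2).drop (3 * (l'.idxOf w))).take 3) = chunks3 l'.length (M.drop 2) := by
      apply List.ext_getElem
      · simp [chunks3_length]
      · intro i h1 h2
        rw [List.getElem_map]
        have hmem : l'[i]'(by simpa using h1) ∈ l' := List.getElem_mem _
        have hne : l'[i]'(by simpa using h1) ≠ r := fun h => hrl' (h ▸ hmem)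
        rw [if_neg hne, chunks3_getElem _ _ _ (by simpa [chunks3_length] using h2),
          hl'nodup.idxOf_getElem]
    rw [hmapeq, chunks3_flatten, if_true, ← List.take_add]
    apply List.take_of_length_le
    omega
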